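/- arXiv:2101.07991 — 8 statements merged into one kernel-verified Lean document; each statement's English description precedes it below -/
import Mathlib

section
/- C_p(G,X) is a second-countable topological space, and a sequence φ_n converges to φ in C_p(G,X) if and only if for every compact subset K ⊆ dom φ one has K ⊆ dom φ_n for all sufficiently large n and sup_{t∈K} d(φ_n(t), φ(t)) → 0 as n → ∞. -/
open Set Filter Topology TopologicalSpace

namespace Yorke

/-- The space `X̂ = X ∪ {ω}`, encoded as `Option X` with `ω = none`.  Its open sets are
`X̂` itself together with the open sets of `X`. -/
instance hatTopology (X : Type*) [TopologicalSpace X] : TopologicalSpace (Option X) :=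
  TopologicalSpace.generateFrom
    ({Set.univ} ∪ {s : Set (Option X) | ∃ u : Set X, IsOpen u ∧ s = (Option.some : X → Option X) '' u})

/-- The space `C_p(G,X)` of partial maps from `G` to `X` (continuous maps defined on a
nonempty open subset of `G`), encoded via the bijection `μ` with the subspace
`{f : C(G,X̂) | f⁻¹(X) ≠ ∅}` of `C(G,X̂)`; it carries the compact-open topology. -/
abbrev Cp (G X : Type*) [TopologicalSpace G] [TopologicalSpace X] : Type _ :=
  {f : C(G, Option X) // {g : G | f g ≠ none}.Nonempty}

variable {G X : Type*} [TopologicalSpace G] [TopologicalSpace X]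

/-- The domain of a partial map. -/
def dom (φ : Cp G X) : Set G := {g : G | φ.1 g ≠ none}

/-- A partial map with nonempty connected domain is maximally defined if every partial map
with nonempty connected domain which extends it is equal to it. -/
def MaximallyDefined (φ : Cp G X) : Prop :=
  IsConnected (dom φ) ∧
    ∀ ψ : Cp G X, IsConnected (dom ψ) → dom φ ⊆ dom ψ →
      (∀ g ∈ dom φ, φ.1 g = ψ.1 g) → φ = ψ

/-- The space `C_s(G,X)` of maximally defined partial maps, with the subspace topology. -/
abbrev Cs (G X : Type*) [TopologicalSpace G] [TopologicalSpace X] : Type _ :=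
  {φ : Cp G X // MaximallyDefined φ}

/-- The orbit `O(φ) = {φ(g) : g ∈ dom φ}`. -/
def orbit (φ : Cs G X) : Set X := {x : X | ∃ g : G, φ.1.1 g = some x}

/-- The star-construction `S*W = {(g,φ) : φ ∈ S, g ∈ dom φ, (g,φ(g)) ∈ W}`. -/
def star (S : Set (Cs G X)) (W : Set (G × X)) : Set (G × Cs G X) :=
  {p : G × Cs G X | p.2 ∈ S ∧ ∃ x : X, p.2.1.1 p.1 = some x ∧ (p.1, x) ∈ W}

/-- `S` satisfies the compactness axiom if `S*W` is compact for every compact `W`. -/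
def CompactnessAxiom (S : Set (Cs G X)) : Prop :=
  ∀ W : Set (G × X), IsCompact W → IsCompact (star S W)

/-- `S` satisfies the existence axiom on `W` if `S*{(t,x)}` is nonempty for all `(t,x) ∈ W`. -/
def ExistenceAxiom (S : Set (Cs G X)) (W : Set (G × X)) : Prop :=
  ∀ p ∈ W, (star S {p}).Nonempty

/-- `S` satisfies the uniqueness axiom on `W` if `S*{(t,x)}` is empty or a singleton. -/
def UniquenessAxiom (S : Set (Cs G X)) (W : Set (G × X)) : Prop :=
  ∀ p ∈ W, (star S {p}).Subsingleton

section GroupPart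

variable {G X : Type*} [TopologicalSpace X] [Group G] [TopologicalSpace G] [IsTopologicalGroup G]

/-- The shift `σ(g,φ)`, the partial map `x ↦ φ(xg)` with domain `(dom φ)g⁻¹`. -/
def shift (g : G) (φ : Cp G X) : Cp G X :=
  ⟨⟨fun x => φ.1 (x * g), φ.1.continuous.comp (continuous_mul_right g)⟩, by
    obtain ⟨g₀, hg₀⟩ := φ.2
    exact ⟨g₀ * g⁻¹, by simpa [inv_mul_cancel_right] using hg₀⟩⟩

/-- `S ⊆ C_s(G,X)` is `σ`-invariant if `σ(g,φ) ∈ S` for all `g ∈ G`, `φ ∈ S`. -/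
def SigmaInvariant (S : Set (Cs G X)) : Prop :=
  ∀ (g : G) (φ : Cs G X), φ ∈ S → ∃ ψ : Cs G X, ψ ∈ S ∧ ψ.1 = shift g φ.1

/-- `A ⊆ X` is weakly invariant with respect to `S` if every `x ∈ A` is the value at the
identity of some `φ ∈ S` with `O(φ) ⊆ A`. -/
def WeaklyInvariant (S : Set (Cs G X)) (A : Set X) : Prop :=
  ∀ x ∈ A, ∃ φ ∈ S, φ.1.1 (1 : G) = some x ∧ orbit φ ⊆ A

/-- `x` is an equilibrium of `S` if some `φ ∈ S` has `φ(e) = x` and `O(φ) = {x}`. -/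
def Equilibrium (S : Set (Cs G X)) (x : X) : Prop :=
  ∃ φ ∈ S, φ.1.1 (1 : G) = some x ∧ orbit φ = {x}

/-- The set of motions `{π(·,x) : x ∈ X} ⊆ C_s(G,X)` of a `G`-action `π`. -/
def actionSet (π : G × X → X) : Set (Cs G X) :=
  {φ : Cs G X | ∃ x : X, ∀ g : G, φ.1.1 g = some (π (g, x))}

end GroupPart

/-- An isomorphism `<H,k,η> : S*W → S'*W'` of star-constructions: the three maps are
homeomorphisms satisfying `ev ∘ H = k ∘ ev` and `p ∘ H = η ∘ p`. -/
structure StarIso {G X G' X' : Type*} [TopologicalSpace G] [TopologicalSpace X]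
    [TopologicalSpace G'] [TopologicalSpace X']
    (S : Set (Cs G X)) (W : Set (G × X)) (S' : Set (Cs G' X')) (W' : Set (G' × X')) where
  H : ↥(star S W) ≃ₜ ↥(star S' W')
  k : ↥W ≃ₜ ↥W'
  η : ↥S ≃ₜ ↥S'
  ev_comm : ∀ (q : ↥(star S W)) (x : X), q.1.2.1.1 q.1.1 = some x →
      ∀ hW : (q.1.1, x) ∈ W, ∀ x' : X', (H q).1.2.1.1 (H q).1.1 = some x' →
      ((k ⟨(q.1.1, x), hW⟩ : ↥W') : G' × X') = ((H q).1.1, x')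
  p_comm : ∀ q : ↥(star S W), (H q).1.2 = ((η ⟨q.1.2, q.2.1⟩ : ↥S') : Cs G' X')

/-- A map `k = (τ,h) : W → W'` preserves phase space if `h(g,x)` does not depend on `g`. -/
def PreservesPhase {G X G' X' : Type*} [TopologicalSpace G] [TopologicalSpace X]
    [TopologicalSpace G'] [TopologicalSpace X'] {W : Set (G × X)} {W' : Set (G' × X')}
    (k : ↥W → ↥W') : Prop :=
  ∀ w w' : ↥W, (w : G × X).2 = (w' : G × X).2 →
    ((k w : ↥W') : G' × X').2 = ((k w' : ↥W') : G' × X').2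

/-- Two continuous maps are isotopic if they are connected by a continuous family of
homeomorphisms parametrized by `[0,1]`. -/
def Isotopic {A B : Type*} [TopologicalSpace A] [TopologicalSpace B] (f₀ f₁ : A → B) : Prop :=
  ∃ F : unitInterval × A → B, Continuous F ∧ (∀ a, F (0, a) = f₀ a) ∧
    (∀ a, F (1, a) = f₁ a) ∧ ∀ s : unitInterval, IsHomeomorph fun a => F (s, a)

end Yorke

namespace Yorke

variable {G X : Type*} [Group G] [TopologicalSpace G] [IsTopologicalGroup G]
  [LocallyCompactSpace G] [SecondCountableTopology G] [T2Space G]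
  [MetricSpace X] [SecondCountableTopology X]


section HatLemmas

variable {X : Type*} [TopologicalSpace X]

lemma isOpen_some_image {u : Set X} (hu : IsOpen u) : IsOpen (some '' u) :=
  TopologicalSpace.isOpen_generateFrom_of_mem (Or.inr ⟨u, hu, rfl⟩)

lemma continuous_some : Continuous (some : X → Option X) := by
  rw [hatTopology, continuous_generateFrom_iff]
  rintro s (rfl | ⟨u, hu, rfl⟩)
  · exact isOpen_univ
  · rwa [Set.preimage_image_eq _ (Option.some_injective X)]

lemma isOpenEmbedding_some : Topology.IsOpenEmbedding (some : X → Option X) :=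
  .of_continuous_injective_isOpenMap continuous_some (Option.some_injective X)
    (fun u hu => isOpen_some_image hu)

lemma isOpen_hat_iff {s : Set (Option X)} :
    IsOpen s ↔ s = univ ∨ ∃ u : Set X, IsOpen u ∧ s = some '' u := by
  constructor
  · intro h
    change TopologicalSpace.GenerateOpen _ s at h
    induction h with
    | basic s hs => exact hs
    | univ => exact Or.inl rfl
    | inter s t _ _ ihs iht =>
      rcases ihs with rfl | ⟨u, hu, rfl⟩
      · simpa using iht
      · rcases iht with rfl | ⟨v, hv, rfl⟩
        · exact Or.inr ⟨u, hu, by simp⟩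
        · exact Or.inr ⟨u ∩ v, hu.inter hv,
            by rw [Set.image_inter (Option.some_injective X)]⟩
    | sUnion S _ ih =>
      by_cases hU : univ ∈ S
      · exact Or.inl (eq_univ_of_univ_subset (subset_sUnion_of_mem hU))
      · have : ∀ s ∈ S, ∃ u : Set X, IsOpen u ∧ s = some '' u := by
          intro s hs
          rcases ih s hs with rfl | h
          · exact absurd hs hU
          · exact h
        choose u hu hsu using this
        refine Or.inr ⟨⋃ s : S, u s s.2, isOpen_iUnion fun s => hu s s.2, ?_⟩
        rw [Set.image_iUnion, sUnion_eq_iUnion]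
        exact iUnion_congr fun s => hsu s s.2
  · rintro (rfl | ⟨u, hu, rfl⟩)
    · exact isOpen_univ
    · exact isOpen_some_image hu

instance hatSecondCountable [SecondCountableTopology X] :
    SecondCountableTopology (Option X) := by
  refine ⟨⟨insert univ ((fun u => (some : X → Option X) '' u) '' countableBasis X),
    ((countable_countableBasis X).image _).insert _, le_antisymm ?_ ?_⟩⟩
  · refine le_generateFrom ?_
    rintro s (rfl | ⟨b, hb, rfl⟩)
    · exact isOpen_univ
    · exact isOpen_some_image (isOpen_of_mem_countableBasis hb)
  · set B := insert univ ((fun u => (some : X → Option X) '' u) '' countableBasis X)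
      with hB
    have h1 : ∀ s ∈ B, IsOpen[TopologicalSpace.generateFrom B] s := fun s hs =>
      TopologicalSpace.isOpen_generateFrom_of_mem hs
    rw [hatTopology]
    refine le_generateFrom ?_
    rintro s (rfl | ⟨u, hu, rfl⟩)
    · exact h1 _ (mem_insert _ _)
    · obtain ⟨S, hS, rfl⟩ := (isBasis_countableBasis X).open_eq_sUnion hu
      rw [sUnion_eq_iUnion, Set.image_iUnion]
      exact @isOpen_iUnion _ _ (TopologicalSpace.generateFrom B) _ fun b =>
        h1 _ (Set.mem_insert_of_mem _ (mem_image_of_mem _ (hS b.2)))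

end HatLemmas

/-- `C_p(G,X)` is second countable, and `φ_n → φ` in `C_p(G,X)` iff for every compact
`K ⊆ dom φ` one has `K ⊆ dom φ_n` for large `n` and `sup_{t ∈ K} d(φ_n(t), φ(t)) → 0`. -/
theorem statement_0 :
    SecondCountableTopology (Cp G X) ∧
    ∀ (φ : ℕ → Cp G X) (ψ : Cp G X),
      Tendsto φ atTop (𝓝 ψ) ↔
        ∀ K : Set G, IsCompact K → K ⊆ dom ψ →
          (∀ᶠ n in atTop, K ⊆ dom (φ n)) ∧
          ∀ ε : ℝ, 0 < ε → ∀ᶠ n in atTop, ∀ t ∈ K, ∀ x y : X,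
            ψ.1 t = some x → (φ n).1 t = some y → dist y x < ε := by
  constructor
  · have : SecondCountableTopology C(G, Option X) := inferInstance
    exact Topology.IsEmbedding.subtypeVal.secondCountableTopology
  · intro φ ψ
    rw [Topology.IsEmbedding.subtypeVal.tendsto_nhds_iff,
      ContinuousMap.tendsto_nhds_compactOpen]
    constructor
    · intro h K hK hKdom
      have hx : ∀ t ∈ K, ∃ x : X, ψ.1 t = some x := fun t ht =>
        Option.ne_none_iff_exists'.1 (hKdom ht)
      have : Nonempty X := by
        obtain ⟨g₀, hg₀⟩ := ψ.2
        obtain ⟨x₀, _⟩ := Option.ne_none_iff_exists'.1 hg₀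
        exact ⟨x₀⟩
      choose! x hxe using hx
      constructor
      · have := h K hK (range some) isOpenEmbedding_some.isOpen_range
          (fun t ht => ⟨x t, (hxe t ht).symm⟩)
        filter_upwards [this] with n hn t ht
        obtain ⟨a, ha⟩ := hn ht
        simp only [Function.comp_apply] at ha
        show (φ n).1 t ≠ none
        rw [← ha]; simp
      · intro ε hε
        have hL : ∀ t ∈ K, ∃ L : Set G, L ∈ 𝓝 t ∧ IsCompact L ∧
            MapsTo ψ.1 L (some '' Metric.ball (x t) (ε / 2)) := by
          intro t ht
          have hV : IsOpen (ψ.1 ⁻¹' (some '' Metric.ball (x t) (ε / 2))) :=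
            (isOpen_some_image Metric.isOpen_ball).preimage ψ.1.continuous
          have htV : t ∈ ψ.1 ⁻¹' (some '' Metric.ball (x t) (ε / 2)) := by
            rw [Set.mem_preimage, hxe t ht]
            exact mem_image_of_mem _ (Metric.mem_ball_self (half_pos hε))
          obtain ⟨L, hLn, hLsub, hLc⟩ :=
            local_compact_nhds (hV.mem_nhds htV)
          exact ⟨L, hLn, hLc, hLsub⟩
        choose! L hLn hLc hLm using hL
        obtain ⟨s, hsK, hs⟩ := hK.elim_nhds_subcover L (fun t ht => hLn t ht)
        have hev : ∀ᶠ n in atTop, ∀ t ∈ s,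
            MapsTo (φ n).1 (K ∩ L t) (some '' Metric.ball (x t) (ε / 2)) := by
          rw [eventually_all_finset]
          intro t hts
          exact h _ (hK.inter_right (hLc t (hsK t hts)).isClosed) _
            (isOpen_some_image Metric.isOpen_ball)
            ((hLm t (hsK t hts)).mono_left inter_subset_right)
        filter_upwards [hev] with n hn t ht a b ha hb
        obtain ⟨t', ht's, htL⟩ : ∃ t' ∈ s, t ∈ L t' := by
          simpa using hs ht
        have h1 : a ∈ Metric.ball (x t') (ε / 2) := by
          obtain ⟨c, hc, hce⟩ := hLm t' (hsK t' ht's) htL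
          rw [ha, Option.some_inj] at hce
          rwa [← hce]
          -- hce : some c = ψ.1 t, with ψ.1 t = some a
        have h2 : b ∈ Metric.ball (x t') (ε / 2) := by
          obtain ⟨c, hc, hce⟩ := hn t' ht's ⟨ht, htL⟩
          rw [hb, Option.some_inj] at hce
          rwa [← hce]
        have := dist_triangle b (x t') a
        rw [Metric.mem_ball] at h1 h2
        rw [dist_comm a (x t')] at h1
        linarith
    · intro h K hK U hU hm
      rcases isOpen_hat_iff.1 hU with rfl | ⟨u, hu, rfl⟩
      · exact Eventually.of_forall fun n => mapsTo_univ _ _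
      · have hKdom : K ⊆ dom ψ := by
          intro t ht
          obtain ⟨c, _, hce⟩ := hm ht
          show ψ.1 t ≠ none
          rw [← hce]; simp
        obtain ⟨h1, h2⟩ := h K hK hKdom
        have himg : ψ.1 '' K ⊆ range (some : X → Option X) :=
          hm.image_subset.trans (image_subset_range _ _)
        have hYc : IsCompact ((some : X → Option X) ⁻¹' (ψ.1 '' K)) := by
          rw [isOpenEmbedding_some.isEmbedding.isCompact_iff,
            Set.image_preimage_eq_of_subset himg]
          exact hK.image ψ.1.continuous
        have hYu : (some : X → Option X) ⁻¹' (ψ.1 '' K) ⊆ u := by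
          intro a ha
          obtain ⟨c, hc, hce⟩ := hm.image_subset ha
          rwa [← Option.some_inj.1 hce]
        obtain ⟨δ, hδ, hth⟩ := hYc.exists_thickening_subset_open hu hYu
        filter_upwards [h1, h2 δ hδ] with n hdom hdist
        intro t ht
        obtain ⟨b, hb⟩ := Option.ne_none_iff_exists'.1 (hdom ht)
        obtain ⟨a, ha⟩ := Option.ne_none_iff_exists'.1 (hKdom ht)
        have hba : dist b a < δ := hdist t ht a b ha hb
        have hbth : b ∈ Metric.thickening δ (some ⁻¹' (ψ.1 '' K)) :=
          Metric.mem_thickening_iff.2 ⟨a, ⟨t, ht, ha⟩, hba⟩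
        exact ⟨b, hth hbth, hb.symm⟩


end Yorke
end

section
/- For every partial map φ ∈ C_p(G,X) with nonempty connected domain there exists a maximally defined partial map φ̄ ∈ C_p(G,X) such that dom φ ⊆ dom φ̄ and φ = φ̄ on dom φ. -/
open Set Filter Topology TopologicalSpace

namespace Yorke

section Aux

variable {G X : Type*} [TopologicalSpace G] [TopologicalSpace X]

lemma hat_continuous_iff (f : G → Option X) :
    Continuous f ↔ ∀ u : Set X, IsOpen u → IsOpen (f ⁻¹' (Option.some '' u)) := by
  rw [continuous_generateFrom_iff]
  constructor
  · intro h u hu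
    exact h _ (Or.inr ⟨u, hu, rfl⟩)
  · rintro h s (rfl | ⟨u, hu, rfl⟩)
    · simp
    · exact h u hu

/-- Extension order on partial maps. -/
instance : Preorder (Cp G X) where
  le ψ χ := dom ψ ⊆ dom χ ∧ ∀ g ∈ dom ψ, ψ.1 g = χ.1 g
  le_refl ψ := ⟨subset_rfl, fun _ _ => rfl⟩
  le_trans ψ χ ρ h h' :=
    ⟨h.1.trans h'.1, fun g hg => (h.2 g hg).trans (h'.2 g (h.1 hg))⟩

lemma le_antisymm' {ψ χ : Cp G X} (h : ψ ≤ χ) (h' : χ ≤ ψ) : ψ = χ := by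
  apply Subtype.ext
  apply ContinuousMap.ext
  intro g
  by_cases hg : g ∈ dom ψ
  · exact h.2 g hg
  · have hg' : g ∉ dom χ := fun hc => hg (h'.1 hc)
    simp only [dom, Set.mem_setOf_eq, not_not] at hg hg'
    rw [hg, hg']

end Aux

end Yorke

namespace Yorke

variable {G X : Type*} [Group G] [TopologicalSpace G] [IsTopologicalGroup G]
  [LocallyCompactSpace G] [SecondCountableTopology G] [T2Space G]
  [MetricSpace X] [SecondCountableTopology X]

/-- Every partial map with nonempty connected domain extends to a maximally defined one. -/
theorem statement_1 (φ : Cp G X) (hφ : IsConnected (dom φ)) :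
    ∃ ψ : Cp G X, MaximallyDefined ψ ∧ dom φ ⊆ dom ψ ∧ ∀ g ∈ dom φ, φ.1 g = ψ.1 g := by
  classical
  obtain ⟨g₀, hg₀⟩ := hφ.nonempty
  set s : Set (Cp G X) := {ψ | IsConnected (dom ψ) ∧ φ ≤ ψ} with hs
  have hφs : φ ∈ s := ⟨hφ, le_refl φ⟩
  have key : ∀ c ⊆ s, IsChain (· ≤ ·) c → ∀ y ∈ c, ∃ ub ∈ s, ∀ z ∈ c, z ≤ ub := by
    intro c hcs hc y hyc
    -- union function
    set f : G → Option X := fun g =>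
      if h : ∃ ψ ∈ c, ψ.1 g ≠ none then h.choose.1 g else none with hf
    have compat : ∀ ψ ∈ c, ∀ g ∈ dom ψ, f g = ψ.1 g := by
      intro ψ hψ g hg
      have hex : ∃ χ ∈ c, χ.1 g ≠ none := ⟨ψ, hψ, hg⟩
      have hχc : hex.choose ∈ c := hex.choose_spec.1
      have hχg : hex.choose.1 g ≠ none := hex.choose_spec.2
      have : f g = hex.choose.1 g := by simp only [hf, dif_pos hex]
      rw [this]
      rcases hc.total hχc hψ with h | h
      · exact h.2 g hχg
      · exact (h.2 g hg).symm
    have hnone : ∀ g, g ∉ (⋃ ψ ∈ c, dom ψ) → f g = none := by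
      intro g hg
      have : ¬ ∃ ψ ∈ c, ψ.1 g ≠ none := by
        rintro ⟨ψ, hψ, hne⟩
        exact hg (Set.mem_biUnion hψ hne)
      simp only [hf, dif_neg this]
    have hpre : ∀ u : Set X, f ⁻¹' (Option.some '' u) = ⋃ ψ ∈ c, ψ.1 ⁻¹' (Option.some '' u) := by
      intro u
      ext g
      simp only [Set.mem_preimage, Set.mem_image, Set.mem_iUnion]
      constructor
      · rintro ⟨x, hxu, hfx⟩
        have hg : g ∈ ⋃ ψ ∈ c, dom ψ := by
          by_contra h
          rw [hnone g h] at hfx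
          exact Option.some_ne_none x hfx
        obtain ⟨ψ, hψ, hgψ⟩ := Set.mem_iUnion₂.1 hg
        exact ⟨ψ, hψ, x, hxu, by rw [← compat ψ hψ g hgψ]; exact hfx⟩
      · rintro ⟨ψ, hψ, x, hxu, hx⟩
        have hgψ : g ∈ dom ψ := by simp [dom, ← hx]
        exact ⟨x, hxu, by rw [compat ψ hψ g hgψ, ← hx]⟩
    have hcont : Continuous f := by
      rw [hat_continuous_iff]
      intro u hu
      rw [hpre u]
      exact isOpen_biUnion fun ψ hψ =>
        (hat_continuous_iff ψ.1).1 ψ.1.continuous u hu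
    have hyφ : φ ≤ y := (hcs hyc).2
    have hgy : g₀ ∈ dom y := hyφ.1 hg₀
    set F : Cp G X := ⟨⟨f, hcont⟩, ⟨g₀, by
      show f g₀ ≠ none
      rw [compat y hyc g₀ hgy]; exact hgy⟩⟩ with hF
    have hdomF : dom F = ⋃ ψ ∈ c, dom ψ := by
      ext g
      constructor
      · intro hg
        by_contra h
        exact hg (hnone g h)
      · rintro hg
        obtain ⟨ψ, hψ, hgψ⟩ := Set.mem_iUnion₂.1 hg
        show f g ≠ none
        rw [compat ψ hψ g hgψ]; exact hgψ
    have hub : ∀ z ∈ c, z ≤ F := by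
      intro z hz
      constructor
      · intro g hg; rw [hdomF]; exact Set.mem_biUnion hz hg
      · intro g hg; exact (compat z hz g hg).symm
    refine ⟨F, ⟨?_, le_trans hyφ (hub y hyc)⟩, hub⟩
    -- connectedness
    rw [hdomF]
    refine ⟨⟨g₀, Set.mem_biUnion hyc hgy⟩, ?_⟩
    have := isPreconnected_sUnion g₀ (dom '' c) ?_ ?_
    · rwa [Set.sUnion_image] at this
    · rintro _ ⟨ψ, hψ, rfl⟩; exact ((hcs hψ).2).1 hg₀
    · rintro _ ⟨ψ, hψ, rfl⟩; exact (hcs hψ).1.isPreconnected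
  obtain ⟨m, hφm, hm⟩ := zorn_le_nonempty₀ s key φ hφs
  refine ⟨m, ⟨hm.prop.1, ?_⟩, hφm.1, hφm.2⟩
  intro ψ hψconn hsub hagree
  have hmψ : m ≤ ψ := ⟨hsub, hagree⟩
  have hψs : ψ ∈ s := ⟨hψconn, le_trans hφm hmψ⟩
  exact le_antisymm' hmψ (hm.2 hψs hmψ)


end Yorke
end

section
/- Let S ⊆ C_s(G,X) satisfy the compactness axiom and let φ ∈ S. If there is a compact set K ⊆ X with O(φ) ⊆ K, then dom φ coincides with a connected component of G. -/
open Set Filter Topology TopologicalSpace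

namespace Yorke

variable {G X : Type*} [Group G] [TopologicalSpace G] [IsTopologicalGroup G]
  [LocallyCompactSpace G] [SecondCountableTopology G] [T2Space G]
  [MetricSpace X] [SecondCountableTopology X]

/-- If `S` satisfies the compactness axiom and the orbit of `φ ∈ S` is contained in a
compact set, then `dom φ` is a connected component of `G`. -/
theorem statement_6 (S : Set (Cs G X)) (hS : CompactnessAxiom S)
    (φ : Cs G X) (hφ : φ ∈ S) (K : Set X) (hK : IsCompact K) (horb : orbit φ ⊆ K) :
    ∃ g : G, dom φ.1 = connectedComponent g := by
  -- The set of non-`none` values is open in the hat topology.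
  have hUopen : IsOpen {o : Option X | o ≠ none} := by
    have h : {o : Option X | o ≠ none} = (Option.some : X → Option X) '' Set.univ := by
      ext o; cases o <;> simp
    rw [h]
    exact TopologicalSpace.isOpen_generateFrom_of_mem (Or.inr ⟨Set.univ, isOpen_univ, rfl⟩)
  -- `dom φ` is open.
  have hdomopen : IsOpen (dom φ.1) := by
    have h : dom φ.1 = φ.1.1 ⁻¹' {o | o ≠ none} := rfl
    rw [h]; exact hUopen.preimage φ.1.1.continuous
  -- evaluation at a point is continuous on `Cs G X`.
  have heval : ∀ g : G, Continuous fun χ : Cs G X => χ.1.1 g := fun g =>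
    (continuous_eval_const g).comp
      (continuous_subtype_val.comp continuous_subtype_val)
  -- `dom φ` is closed.
  have hdomclosed : IsClosed (dom φ.1) := by
    rw [← closure_subset_iff_isClosed]
    intro g hg
    obtain ⟨N, hNcomp, hNnhds⟩ := exists_compact_mem_nhds g
    have hW : IsCompact (N ×ˢ K) := hNcomp.prod hK
    have hC := hS _ hW
    have hne : (𝓝[dom φ.1] g).NeBot := mem_closure_iff_nhdsWithin_neBot.mp hg
    set f : G → G × Cs G X := fun u => (u, φ) with hf
    set L := Filter.map f (𝓝[dom φ.1] g) with hL
    have hLP : L ≤ Filter.principal (star S (N ×ˢ K)) := by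
      rw [Filter.le_principal_iff, hL, Filter.mem_map]
      filter_upwards [self_mem_nhdsWithin, nhdsWithin_le_nhds hNnhds] with u hu hN
      obtain ⟨x, hx⟩ : ∃ x, φ.1.1 u = some x := Option.ne_none_iff_exists'.mp hu
      exact ⟨hφ, x, hx, Set.mk_mem_prod hN (horb ⟨u, hx⟩)⟩
    haveI : L.NeBot := Filter.map_neBot
    obtain ⟨⟨g', ψ⟩, hmem, hcl⟩ := hC hLP
    -- the first coordinate: `g' = g` by Hausdorffness of `G`.
    have hfst : Filter.map Prod.fst L = 𝓝[dom φ.1] g := by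
      rw [hL, Filter.map_map]; exact Filter.map_id
    have hg' : g' = g := by
      have h1 : ClusterPt g' (Filter.map Prod.fst L) := hcl.map continuous_fst.continuousAt Filter.tendsto_map
      rw [hfst] at h1
      exact eq_of_nhds_neBot (h1.mono nhdsWithin_le_nhds).neBot
    subst hg'
    -- the second coordinate: every neighborhood of `ψ` contains `φ`.
    have hsnd : Filter.map Prod.snd L = pure φ := by
      rw [hL, Filter.map_map]
      exact Filter.map_const
    have hclψ : ClusterPt ψ (pure φ) := by
      have h2 : ClusterPt ψ (Filter.map Prod.snd L) := hcl.map continuous_snd.continuousAt Filter.tendsto_map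
      rwa [hsnd] at h2
    -- build an open neighborhood of `ψ` forcing `φ` to be defined at `g'`.
    obtain ⟨-, x, hx, -⟩ := hmem
    set V : Set (Cs G X) := (fun χ : Cs G X => χ.1.1 g') ⁻¹' {o | o ≠ none} with hV
    have hVopen : IsOpen V := hUopen.preimage (heval g')
    have hψV : ψ ∈ V := by simp [hV, hx]
    have hφV : φ ∈ V := by
      have hVmem : V ∩ {φ} ∈ 𝓝 ψ ⊓ pure φ :=
        Filter.inter_mem (Filter.le_def.mp inf_le_left _ (hVopen.mem_nhds hψV))
          (Filter.le_def.mp inf_le_right _ (by simp))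
      obtain ⟨y, hyV, hyφ⟩ := hclψ.neBot.nonempty_of_mem hVmem
      rwa [Set.mem_singleton_iff.mp hyφ] at hyV
    exact hφV
  -- `dom φ` is nonempty, connected and clopen, hence a connected component.
  obtain ⟨g₀, hg₀⟩ := φ.2.1.1
  refine ⟨g₀, subset_antisymm (φ.2.1.2.subset_connectedComponent hg₀) ?_⟩
  exact IsClopen.connectedComponent_subset ⟨hdomclosed, hdomopen⟩ hg₀

end Yorke
end

section
/- The shift map σ: G × C_p(G,X) → C_p(G,X), defined by σ(g,φ)(x) := φ(xg) for x ∈ (dom φ)g⁻¹, is continuous and satisfies σ(e,φ) = φ for every φ ∈ C_p(G,X) and σ(g,σ(h,φ)) = σ(gh,φ) for all g,h ∈ G and φ ∈ C_p(G,X); that is, σ is a continuous left G-action on C_p(G,X). -/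
open Set Filter Topology TopologicalSpace

namespace Yorke

variable {G X : Type*} [Group G] [TopologicalSpace G] [IsTopologicalGroup G]
  [LocallyCompactSpace G] [SecondCountableTopology G] [T2Space G]
  [MetricSpace X] [SecondCountableTopology X]

/-- The shift map `σ` is a continuous left `G`-action on `C_p(G,X)`. -/
theorem statement_8 :
    Continuous (fun p : G × Cp G X => shift p.1 p.2) ∧
    (∀ φ : Cp G X, shift (1 : G) φ = φ) ∧
    ∀ (g h : G) (φ : Cp G X), shift g (shift h φ) = shift (g * h) φ := by
  refine ⟨?_, ?_, ?_⟩
  · apply Continuous.subtype_mk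
    have hr : Continuous fun g : G => (ContinuousMap.mk fun x : G => x * g) :=
      (ContinuousMap.curry
        (⟨fun p : G × G => p.2 * p.1, by fun_prop⟩ : C(G × G, G))).continuous
    exact ContinuousMap.continuous_comp'.comp
      ((hr.comp continuous_fst).prodMk (continuous_subtype_val.comp continuous_snd))
  · intro φ; apply Subtype.ext; ext x; simp [shift]
  · intro g h φ; apply Subtype.ext; ext x; simp [shift, mul_assoc]

end Yorke
end

section
/- Let X be locally compact. If a σ-invariant subset S ⊆ C_s(G,X) satisfies the compactness, existence, and uniqueness axioms on G × X and has domain G, then S*(G × X) is isomorphic to S₀*(G × X), where S₀ := {ψ_x ∈ C_s(G,X) : ψ_x(g) = x for all g ∈ G, x ∈ X} is the set of constant maps. -/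
open Set Filter Topology TopologicalSpace

namespace Yorke

variable {G X : Type*} [Group G] [TopologicalSpace G] [IsTopologicalGroup G]
  [LocallyCompactSpace G] [SecondCountableTopology G] [T2Space G]
  [MetricSpace X] [SecondCountableTopology X]

section Aux

variable {X : Type*} [TopologicalSpace X]

lemma isInducing_some : IsInducing (Option.some : X → Option X) := by
  constructor
  show _ = TopologicalSpace.induced _ (hatTopology X)
  rw [hatTopology, induced_generateFrom_eq]
  have h : Set.preimage (Option.some : X → Option X) ''
      ({Set.univ} ∪ {s : Set (Option X) | ∃ u : Set X, IsOpen u ∧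
        s = (Option.some : X → Option X) '' u}) = {u : Set X | IsOpen u} := by
    ext u
    constructor
    · rintro ⟨s, hs | ⟨v, hv, rfl⟩, rfl⟩
      · simp_all [isOpen_univ]
      · simpa [Set.preimage_image_eq _ (Option.some_injective X)] using hv
    · intro hu
      exact ⟨Option.some '' u, Or.inr ⟨u, hu, rfl⟩,
        Set.preimage_image_eq _ (Option.some_injective X)⟩
  rw [h, generateFrom_setOf_isOpen]

lemma continuous_option_get {A : Type*} [TopologicalSpace A] {f : A → Option X}
    (hf : Continuous f) (h : ∀ a, (f a).isSome) : Continuous fun a => (f a).get (h a) := by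
  rw [isInducing_some.continuous_iff]
  have hc : (Option.some ∘ fun a => (f a).get (h a)) = f :=
    funext fun a => Option.some_get (h a)
  rw [hc]; exact hf

/-- A homeomorphism between two empty spaces. -/
def emptyHomeo (α β : Type*) [TopologicalSpace α] [TopologicalSpace β] [IsEmpty α] [IsEmpty β] :
    α ≃ₜ β where
  toEquiv := Equiv.equivOfIsEmpty α β
  continuous_toFun := ⟨fun s _ => by
    rw [Set.eq_empty_of_isEmpty ((Equiv.equivOfIsEmpty α β).toFun ⁻¹' s)]; exact isOpen_empty⟩
  continuous_invFun := ⟨fun s _ => by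
    rw [Set.eq_empty_of_isEmpty ((Equiv.equivOfIsEmpty α β).invFun ⁻¹' s)]; exact isOpen_empty⟩

end Aux

/-- A `σ`-invariant `S` satisfying the axioms with domain `G` has `S*(G×X)` isomorphic to
`S₀*(G×X)`, where `S₀` is the set of constant maps. -/
theorem statement_14 [LocallyCompactSpace X] (S : Set (Cs G X)) (hσ : SigmaInvariant S)
    (hcomp : CompactnessAxiom S) (hex : ExistenceAxiom S Set.univ)
    (huniq : UniquenessAxiom S Set.univ)
    (hdom : ∀ φ : Cs G X, φ ∈ S → dom φ.1 = Set.univ) :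
    Nonempty (StarIso S (Set.univ : Set (G × X))
      {φ : Cs G X | ∃ x : X, ∀ g : G, φ.1.1 g = some x} (Set.univ : Set (G × X))) := by
  classical
  rcases isEmpty_or_nonempty X with hX | hX
  · -- X is empty: all the relevant spaces are empty.
    have hCp : IsEmpty (Cp G X) := ⟨fun φ => by
      obtain ⟨g, hg⟩ := φ.2
      cases hv : φ.1 g with
      | none => exact hg hv
      | some x => exact hX.false x⟩
    have hCs : IsEmpty (Cs G X) := ⟨fun φ => hCp.false φ.1⟩
    have h1 : IsEmpty ↥(star S (Set.univ : Set (G × X))) := ⟨fun q => hCs.false q.1.2⟩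
    have h2 : IsEmpty ↥(star {φ : Cs G X | ∃ x : X, ∀ g : G, φ.1.1 g = some x}
        (Set.univ : Set (G × X))) := ⟨fun q => hCs.false q.1.2⟩
    have h3 : IsEmpty ↥(Set.univ : Set (G × X)) := ⟨fun q => hX.false q.1.2⟩
    have h4 : IsEmpty ↥S := ⟨fun q => hCs.false q.1⟩
    have h5 : IsEmpty ↥{φ : Cs G X | ∃ x : X, ∀ g : G, φ.1.1 g = some x} :=
      ⟨fun q => hCs.false q.1⟩
    exact ⟨⟨emptyHomeo _ _, emptyHomeo _ _, emptyHomeo _ _,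
      fun q => isEmptyElim q, fun q => isEmptyElim q⟩⟩
  · -- X is nonempty: the main construction.
    obtain ⟨x₀⟩ := hX
    -- existence gives us an element of S, hence connectedness of `univ : Set G`
    obtain ⟨q₀, hq₀⟩ := hex (1, x₀) trivial
    have hconnG : IsConnected (Set.univ : Set G) := by
      have h := q₀.2.2.1
      rwa [hdom q₀.2 hq₀.1] at h
    have hS_some : ∀ φ : Cs G X, φ ∈ S → ∀ g : G, (φ.1.1 g).isSome := by
      intro φ hφ g
      have hg : g ∈ dom φ.1 := by rw [hdom φ hφ]; trivial
      exact Option.ne_none_iff_isSome.mp hg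
    -- the constant maps
    let cmapP : X → Cp G X := fun x => ⟨ContinuousMap.const G (some x), ⟨1, by simp⟩⟩
    have hcmapdom : ∀ x, dom (cmapP x) = Set.univ := fun x =>
      Set.eq_univ_of_forall fun g => by simp [dom, cmapP]
    have hcmapmax : ∀ x, MaximallyDefined (cmapP x) := by
      intro x
      constructor
      · rw [hcmapdom]; exact hconnG
      · intro ψ hψc hsub hag
        apply Subtype.ext; apply ContinuousMap.ext; intro g
        exact hag g (by rw [hcmapdom]; trivial)
    let cmap : X → Cs G X := fun x => ⟨cmapP x, hcmapmax x⟩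
    have hcmap_eq : ∀ (ψ : Cs G X) (x : X), (∀ g : G, ψ.1.1 g = some x) → cmap x = ψ := by
      intro ψ x h
      apply Subtype.ext; apply Subtype.ext; apply ContinuousMap.ext; intro g
      exact (h g).symm
    have hcmap_cont : Continuous cmap := by
      apply Continuous.subtype_mk
      apply Continuous.subtype_mk
      exact ContinuousMap.continuous_const'.comp isInducing_some.continuous
    -- the solution map
    have hsol_ex : ∀ p : G × X, ∃ φ : Cs G X, φ ∈ S ∧ φ.1.1 p.1 = some p.2 := by
      intro p
      obtain ⟨q, hqS, x, hqv, hqp⟩ := hex p trivial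
      have h1 : q.1 = p.1 := congrArg Prod.fst hqp
      have h2 : x = p.2 := congrArg Prod.snd hqp
      exact ⟨q.2, hqS, by rw [← h1, hqv, h2]⟩
    choose sol hsolS hsolv using hsol_ex
    have hsol_uniq : ∀ (p : G × X) (φ : Cs G X), φ ∈ S → φ.1.1 p.1 = some p.2 → φ = sol p := by
      intro p φ hφ hv
      have h1 : (p.1, φ) ∈ star S {p} := ⟨hφ, p.2, hv, rfl⟩
      have h2 : (p.1, sol p) ∈ star S {p} := ⟨hsolS p, p.2, hsolv p, rfl⟩
      exact congrArg Prod.snd (huniq p trivial h1 h2)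
    -- continuity of evaluation
    have hev : Continuous fun q : G × Cs G X => q.2.1.1 q.1 :=
      (((continuous_subtype_val.comp continuous_subtype_val).comp continuous_snd)).eval
        continuous_fst
    have hev1 : Continuous fun q : G × Cs G X => q.2.1.1 (1 : G) :=
      hev.comp (continuous_const.prodMk continuous_snd)
    have hevCs : Continuous fun φ : Cs G X => φ.1.1 (1 : G) :=
      (continuous_eval_const (1 : G)).comp (continuous_subtype_val.comp continuous_subtype_val)
    -- membership helper
    have hstar_mem : ∀ (g : G) (φ : Cs G X), φ ∈ S →
        (g, φ) ∈ star S (Set.univ : Set (G × X)) := by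
      intro g φ hφ
      exact ⟨hφ, (φ.1.1 g).get (hS_some φ hφ g), (Option.some_get _).symm, trivial⟩
    -- the evaluation homeomorphism Φ : S*(G×X) ≃ₜ G×X, (g,φ) ↦ (g, φ(g))
    set Φto : ↥(star S (Set.univ : Set (G × X))) → G × X :=
      fun q => (q.1.1, (q.1.2.1.1 q.1.1).get (hS_some q.1.2 q.2.1 q.1.1)) with hΦto_def
    set Φinv : G × X → ↥(star S (Set.univ : Set (G × X))) :=
      fun p => ⟨(p.1, sol p), hstar_mem p.1 (sol p) (hsolS p)⟩ with hΦinv_def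
    have hΦleft : ∀ q, Φinv (Φto q) = q := by
      intro q
      have hs : q.1.2 = sol (Φto q) :=
        hsol_uniq (Φto q) q.1.2 q.2.1 (Option.some_get _).symm
      apply Subtype.ext
      exact Prod.ext rfl hs.symm
    have hΦright : ∀ p, Φto (Φinv p) = p := by
      intro p
      refine Prod.ext rfl ?_
      apply Option.some_injective
      rw [Option.some_get, hsolv p]
    have hΦto_cont : Continuous Φto :=
      (continuous_fst.comp continuous_subtype_val).prodMk
        (continuous_option_get (hev.comp continuous_subtype_val) _)
    have hΦ_compact_preim : ∀ K : Set (G × X), IsCompact K → IsCompact (Φto ⁻¹' K) := by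
      intro K hK
      have hpre : Φto ⁻¹' K = Subtype.val ⁻¹' (star S K) := by
        ext q
        simp only [Set.mem_preimage]
        constructor
        · intro hqK
          exact ⟨q.2.1, _, (Option.some_get _).symm, hqK⟩
        · rintro ⟨-, x, hx, hxK⟩
          have hg : (q.1.2.1.1 q.1.1).get (hS_some q.1.2 q.2.1 q.1.1) = x := by
            apply Option.some_injective; rw [Option.some_get, hx]
          show Φto q ∈ K
          rw [hΦto_def]
          simpa [hg] using hxK
      rw [hpre, IsEmbedding.subtypeVal.isCompact_iff]
      have himg : Subtype.val '' (Subtype.val ⁻¹'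
          (star S K) : Set ↥(star S (Set.univ : Set (G × X)))) = star S K := by
        rw [Subtype.image_preimage_coe]
        apply Set.inter_eq_self_of_subset_right
        rintro q ⟨hqS, x, hx, -⟩
        exact ⟨hqS, x, hx, trivial⟩
      rw [himg]
      exact hcomp K hK
    have hΦproper : IsProperMap Φto :=
      isProperMap_iff_isCompact_preimage.mpr ⟨hΦto_cont, hΦ_compact_preim⟩
    have hΦbij : Function.Bijective Φto :=
      ⟨fun a b h => by rw [← hΦleft a, ← hΦleft b, h], fun p => ⟨Φinv p, hΦright p⟩⟩
    have hΦopen : IsOpenMap Φto := by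
      intro U hU
      have h2 : IsClosed (Φto '' Uᶜ) := hΦproper.isClosedMap _ hU.isClosed_compl
      rw [Set.image_compl_eq hΦbij] at h2
      simpa using h2.isOpen_compl
    set Φ : ↥(star S (Set.univ : Set (G × X))) ≃ₜ G × X :=
      Equiv.toHomeomorphOfContinuousOpen ⟨Φto, Φinv, hΦleft, hΦright⟩ hΦto_cont hΦopen
      with hΦ_def
    have hsol_cont : Continuous sol := by
      have h1 : Continuous fun p : G × X => ((Φ.symm p : G × Cs G X)).2 :=
        continuous_snd.comp (continuous_subtype_val.comp Φ.symm.continuous)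
      exact h1
    -- the homeomorphism Ψ : S*(G×X) ≃ₜ G×X, (g,φ) ↦ (g, φ(1))
    set Ψto : ↥(star S (Set.univ : Set (G × X))) → G × X :=
      fun q => (q.1.1, (q.1.2.1.1 (1 : G)).get (hS_some q.1.2 q.2.1 1)) with hΨto_def
    set Ψinv : G × X → ↥(star S (Set.univ : Set (G × X))) :=
      fun p => ⟨(p.1, sol (1, p.2)), hstar_mem p.1 _ (hsolS _)⟩ with hΨinv_def
    have hΨleft : ∀ q, Ψinv (Ψto q) = q := by
      intro q
      have hs : q.1.2 = sol (1, (Ψto q).2) :=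
        hsol_uniq (1, (Ψto q).2) q.1.2 q.2.1 (Option.some_get _).symm
      apply Subtype.ext
      exact Prod.ext rfl hs.symm
    have hΨright : ∀ p, Ψto (Ψinv p) = p := by
      intro p
      refine Prod.ext rfl ?_
      apply Option.some_injective
      rw [Option.some_get, hsolv (1, p.2)]
    have hΨto_cont : Continuous Ψto :=
      (continuous_fst.comp continuous_subtype_val).prodMk
        (continuous_option_get (hev1.comp continuous_subtype_val) _)
    have hΨinv_cont : Continuous Ψinv := by
      apply Continuous.subtype_mk
      exact continuous_fst.prodMk (hsol_cont.comp (continuous_const.prodMk continuous_snd))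
    set Ψ : ↥(star S (Set.univ : Set (G × X))) ≃ₜ G × X :=
      Homeomorph.mk ⟨Ψto, Ψinv, hΨleft, hΨright⟩ hΨto_cont hΨinv_cont with hΨ_def
    -- S₀ and its evaluation homeomorphism
    set S₀ : Set (Cs G X) := {φ : Cs G X | ∃ x : X, ∀ g : G, φ.1.1 g = some x} with hS₀_def
    have hS₀_some : ∀ φ : Cs G X, φ ∈ S₀ → ∀ g : G, (φ.1.1 g).isSome := by
      intro φ hφ g
      obtain ⟨x, hx⟩ := hφ
      rw [hx g]; rfl
    have hcmap_mem : ∀ x : X, cmap x ∈ S₀ := fun x => ⟨x, fun g => rfl⟩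
    set Φ₀to : ↥(star S₀ (Set.univ : Set (G × X))) → G × X :=
      fun q => (q.1.1, (q.1.2.1.1 (1 : G)).get (hS₀_some q.1.2 q.2.1 1)) with hΦ₀to_def
    set Φ₀inv : G × X → ↥(star S₀ (Set.univ : Set (G × X))) :=
      fun p => ⟨(p.1, cmap p.2), hcmap_mem p.2, p.2, rfl, trivial⟩ with hΦ₀inv_def
    have hΦ₀left : ∀ q, Φ₀inv (Φ₀to q) = q := by
      intro q
      obtain ⟨x, hx⟩ := q.2.1
      have hg : (q.1.2.1.1 (1 : G)).get (hS₀_some q.1.2 q.2.1 1) = x := by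
        apply Option.some_injective; rw [Option.some_get, hx 1]
      apply Subtype.ext
      refine Prod.ext rfl ?_
      show cmap ((Φ₀to q).2) = q.1.2
      rw [hΦ₀to_def]
      simp only
      rw [hg]
      exact hcmap_eq q.1.2 x hx
    have hΦ₀right : ∀ p, Φ₀to (Φ₀inv p) = p := by
      intro p
      exact Prod.ext rfl rfl
    have hΦ₀to_cont : Continuous Φ₀to :=
      (continuous_fst.comp continuous_subtype_val).prodMk
        (continuous_option_get (hev1.comp continuous_subtype_val) _)
    have hΦ₀inv_cont : Continuous Φ₀inv := by
      apply Continuous.subtype_mk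
      exact continuous_fst.prodMk (hcmap_cont.comp continuous_snd)
    set Φ₀ : ↥(star S₀ (Set.univ : Set (G × X))) ≃ₜ G × X :=
      Homeomorph.mk ⟨Φ₀to, Φ₀inv, hΦ₀left, hΦ₀right⟩ hΦ₀to_cont hΦ₀inv_cont with hΦ₀_def
    -- η : S ≃ₜ S₀
    set ηto : ↥S → ↥S₀ :=
      fun φ => ⟨cmap ((φ.1.1.1 (1 : G)).get (hS_some φ.1 φ.2 1)), hcmap_mem _⟩ with hηto_def
    set ηinv : ↥S₀ → ↥S :=
      fun ψ => ⟨sol (1, (ψ.1.1.1 (1 : G)).get (hS₀_some ψ.1 ψ.2 1)), hsolS _⟩ with hηinv_def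
    have hηleft : ∀ φ, ηinv (ηto φ) = φ := by
      intro φ
      apply Subtype.ext
      show sol (1, _) = φ.1
      have hs : φ.1 = sol (1, (φ.1.1.1 (1 : G)).get (hS_some φ.1 φ.2 1)) :=
        hsol_uniq _ φ.1 φ.2 (Option.some_get _).symm
      exact hs.symm
    have hηright : ∀ ψ, ηto (ηinv ψ) = ψ := by
      intro ψ
      obtain ⟨x, hx⟩ := ψ.2
      apply Subtype.ext
      show cmap _ = ψ.1
      have hc : (ψ.1.1.1 (1 : G)).get (hS₀_some ψ.1 ψ.2 1) = x := by
        apply Option.some_injective; rw [Option.some_get, hx 1]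
      have hv : ((sol (1, (ψ.1.1.1 (1 : G)).get (hS₀_some ψ.1 ψ.2 1))).1.1 (1 : G)).get
          (hS_some _ (hsolS _) 1) = x := by
        apply Option.some_injective
        rw [Option.some_get, hsolv (1, (ψ.1.1.1 (1 : G)).get (hS₀_some ψ.1 ψ.2 1)), hc]
      rw [hv]
      exact hcmap_eq ψ.1 x hx
    have hηto_cont : Continuous ηto := by
      apply Continuous.subtype_mk
      exact hcmap_cont.comp
        (continuous_option_get (hevCs.comp continuous_subtype_val) _)
    have hηinv_cont : Continuous ηinv := by
      apply Continuous.subtype_mk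
      exact hsol_cont.comp (continuous_const.prodMk
        (continuous_option_get (hevCs.comp continuous_subtype_val) _))
    set η : ↥S ≃ₜ ↥S₀ :=
      Homeomorph.mk ⟨ηto, ηinv, hηleft, hηright⟩ hηto_cont hηinv_cont with hη_def
    -- assemble the isomorphism
    set H : ↥(star S (Set.univ : Set (G × X))) ≃ₜ ↥(star S₀ (Set.univ : Set (G × X))) :=
      Ψ.trans Φ₀.symm with hH_def
    set k : ↥(Set.univ : Set (G × X)) ≃ₜ ↥(Set.univ : Set (G × X)) :=
      ((Homeomorph.Set.univ (G × X)).trans (Φ.symm.trans Ψ)).trans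
        (Homeomorph.Set.univ (G × X)).symm with hk_def
    refine ⟨⟨H, k, η, ?_, ?_⟩⟩
    · -- ev_comm
      intro q x hx hW x' hx'
      -- identify H q
      have hHq : H q = Φ₀inv (Ψto q) := rfl
      have hH1 : (H q).1.1 = q.1.1 := by rw [hHq]
      have hH2 : (H q).1.2 = cmap ((q.1.2.1.1 (1 : G)).get (hS_some q.1.2 q.2.1 1)) := by
        rw [hHq]
      -- identify x'
      have hx'' : some ((q.1.2.1.1 (1 : G)).get (hS_some q.1.2 q.2.1 1)) = some x' := by
        rw [← hx']
        rw [hH2]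
        rfl
      have hx'v : x' = (q.1.2.1.1 (1 : G)).get (hS_some q.1.2 q.2.1 1) :=
        (Option.some_injective _ hx'').symm
      -- identify k
      have hkq : ((k ⟨(q.1.1, x), hW⟩ : ↥(Set.univ : Set (G × X))) : G × X) =
          Ψto (Φinv (q.1.1, x)) := rfl
      have hsq : sol (q.1.1, x) = q.1.2 := (hsol_uniq (q.1.1, x) q.1.2 q.2.1 hx).symm
      have hv2 : ((sol (q.1.1, x)).1.1 (1 : G)).get (hS_some _ (hsolS _) 1) =
          (q.1.2.1.1 (1 : G)).get (hS_some q.1.2 q.2.1 1) := by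
        apply Option.some_injective
        rw [Option.some_get, Option.some_get, hsq]
      rw [hkq, hH1, hx'v]
      show (q.1.1, ((sol (q.1.1, x)).1.1 (1 : G)).get _) = _
      exact Prod.ext rfl hv2
    · -- p_comm
      intro q
      rfl


end Yorke
end

section
/- Let the star-constructions S*W and (S')*W' be isomorphic via phase space-preserving isomorphisms, where W ⊆ G × X and W' ⊆ G' × X' are open. Then the induced map ĥ: Ŵ → Ŵ' is a homeomorphism, and for each x ∈ Ŵ the slice W_x := {g ∈ G : (g,x) ∈ W} is homeomorphic to the slice W'_{ĥ(x)} := {g' ∈ G' : (g',ĥ(x)) ∈ W'} via the map g ↦ τ(g,x). -/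
open Set Filter Topology TopologicalSpace

namespace Yorke

variable {G X : Type*} [Group G] [TopologicalSpace G] [IsTopologicalGroup G]
  [LocallyCompactSpace G] [SecondCountableTopology G] [T2Space G]
  [MetricSpace X] [SecondCountableTopology X]

variable {G' X' : Type*} [Group G'] [TopologicalSpace G'] [IsTopologicalGroup G']
  [LocallyCompactSpace G'] [SecondCountableTopology G'] [T2Space G']
  [MetricSpace X'] [SecondCountableTopology X']


private lemma contOnAux {G X G' X' : Type*} [TopologicalSpace G] [TopologicalSpace X]
    [TopologicalSpace G'] [TopologicalSpace X'] {W : Set (G × X)} {W' : Set (G' × X')}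
    (hWopen : IsOpen W) (k : ↥W → ↥W') (hkc : Continuous k) (f : X → X')
    (hf : ∀ (g : G) (x : X) (h : (g, x) ∈ W), f x = ((k ⟨(g, x), h⟩ : ↥W') : G' × X').2) :
    ContinuousOn f {x : X | ∃ g : G, (g, x) ∈ W} := by
  intro x hx
  obtain ⟨g, hgx⟩ := hx
  apply ContinuousAt.continuousWithinAt
  have hUopen : IsOpen {y : X | (g, y) ∈ W} := hWopen.preimage (Continuous.prodMk_right g)
  have hcon : ContinuousOn f {y : X | (g, y) ∈ W} := by
    rw [continuousOn_iff_continuous_restrict]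
    have heq : {y : X | (g, y) ∈ W}.restrict f
        = fun u : ↥{y : X | (g, y) ∈ W} => ((k ⟨(g, u.1), u.2⟩ : ↥W') : G' × X').2 := by
      funext u; exact hf g u.1 u.2
    change Continuous ({y : X | (g, y) ∈ W}.restrict f)
    rw [heq]
    exact (continuous_snd.comp continuous_subtype_val).comp
      (hkc.comp (Continuous.subtype_mk (continuous_const.prodMk continuous_subtype_val) _))
  exact hcon.continuousAt (hUopen.mem_nhds hgx)

/-- For a phase space-preserving isomorphism between `S*W` and `S'*W'` with `W`, `W'`
open, the induced map `ĥ : Ŵ → Ŵ'` is a homeomorphism, and each slice `W_x` is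
homeomorphic to the slice `W'_{ĥ(x)}` via `g ↦ τ(g,x)`. -/
theorem statement_15 (S : Set (Cs G X)) (S' : Set (Cs G' X'))
    (W : Set (G × X)) (W' : Set (G' × X')) (hWopen : IsOpen W) (hW'open : IsOpen W')
    (iso : StarIso S W S' W') (hk : PreservesPhase iso.k)
    (hk' : PreservesPhase iso.k.symm)
    (hh : X → X')
    (hhdef : ∀ (g : G) (x : X) (hgx : (g, x) ∈ W),
      hh x = ((iso.k ⟨(g, x), hgx⟩ : ↥W') : G' × X').2) :
    (∀ x ∈ {x : X | ∃ g : G, (g, x) ∈ W}, hh x ∈ {x' : X' | ∃ g' : G', (g', x') ∈ W'}) ∧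
    (∃ e : ↥{x : X | ∃ g : G, (g, x) ∈ W} ≃ₜ ↥{x' : X' | ∃ g' : G', (g', x') ∈ W'},
      ∀ w : ↥{x : X | ∃ g : G, (g, x) ∈ W}, ((e w) : X') = hh (w : X)) ∧
    ∀ x : X, (∃ g : G, (g, x) ∈ W) →
      ∃ e : ↥{g : G | (g, x) ∈ W} ≃ₜ ↥{g' : G' | (g', hh x) ∈ W'},
        ∀ (g : G) (hg : (g, x) ∈ W),
          ((e ⟨g, hg⟩) : G') = ((iso.k ⟨(g, x), hg⟩ : ↥W') : G' × X').1 := by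
  classical
  by_cases hne : Nonempty X
  case neg =>
    haveI : IsEmpty X := not_nonempty_iff.mp hne
    haveI h1 : IsEmpty ↥{x : X | ∃ g : G, (g, x) ∈ W} := ⟨fun w => isEmptyElim (w : X)⟩
    haveI h2 : IsEmpty ↥{x' : X' | ∃ g' : G', (g', x') ∈ W'} := by
      refine ⟨fun w => ?_⟩
      obtain ⟨g', h'⟩ := w.2
      exact isEmptyElim ((iso.k.symm ⟨(g', w.1), h'⟩ : ↥W) : G × X).2
    exact ⟨fun x => isEmptyElim x, ⟨Homeomorph.empty, fun w => isEmptyElim w⟩,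
      fun x => isEmptyElim x⟩
  case pos =>
    -- the inverse map on phase spaces
    set hh' : X' → X := fun x' =>
      if h : ∃ g' : G', (g', x') ∈ W' then
        ((iso.k.symm ⟨(h.choose, x'), h.choose_spec⟩ : ↥W) : G × X).2
      else Classical.arbitrary X with hh'def0
    have hh'def : ∀ (g' : G') (x' : X') (h : (g', x') ∈ W'),
        hh' x' = ((iso.k.symm ⟨(g', x'), h⟩ : ↥W) : G × X).2 := by
      intro g' x' h
      have hex : ∃ g'' : G', (g'', x') ∈ W' := ⟨g', h⟩
      rw [hh'def0]
      simp only [dif_pos hex]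
      exact hk' ⟨(hex.choose, x'), hex.choose_spec⟩ ⟨(g', x'), h⟩ rfl
    -- hh maps Ŵ into Ŵ'
    have hmem : ∀ x ∈ {x : X | ∃ g : G, (g, x) ∈ W}, hh x ∈ {x' : X' | ∃ g' : G', (g', x') ∈ W'} := by
      rintro x ⟨g, hgx⟩
      refine ⟨((iso.k ⟨(g, x), hgx⟩ : ↥W') : G' × X').1, ?_⟩
      rw [hhdef g x hgx]
      simpa using (iso.k ⟨(g, x), hgx⟩).2
    -- hh' maps Ŵ' into Ŵ
    have hmem' : ∀ x' ∈ {x' : X' | ∃ g' : G', (g', x') ∈ W'},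
        hh' x' ∈ {x : X | ∃ g : G, (g, x) ∈ W} := by
      rintro x' ⟨g', h'⟩
      refine ⟨((iso.k.symm ⟨(g', x'), h'⟩ : ↥W) : G × X).1, ?_⟩
      rw [hh'def g' x' h']
      simpa using (iso.k.symm ⟨(g', x'), h'⟩).2
    -- left inverse
    have hleft : ∀ x ∈ {x : X | ∃ g : G, (g, x) ∈ W}, hh' (hh x) = x := by
      rintro x ⟨g, hgx⟩
      set w' : ↥W' := iso.k ⟨(g, x), hgx⟩ with hw'
      have hW'mem : ((w' : G' × X').1, hh x) ∈ W' := by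
        rw [hhdef g x hgx]; exact w'.2
      rw [hh'def _ _ hW'mem]
      have hweq : (⟨((w' : G' × X').1, hh x), hW'mem⟩ : ↥W') = w' := by
        apply Subtype.ext
        exact Prod.ext_iff.mpr ⟨rfl, hhdef g x hgx⟩
      rw [hweq, hw', Homeomorph.symm_apply_apply]
    -- right inverse
    have hright : ∀ x' ∈ {x' : X' | ∃ g' : G', (g', x') ∈ W'}, hh (hh' x') = x' := by
      rintro x' ⟨g', h'⟩
      set w : ↥W := iso.k.symm ⟨(g', x'), h'⟩ with hw
      have hWmem : ((w : G × X).1, hh' x') ∈ W := by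
        rw [hh'def g' x' h']; exact w.2
      rw [hhdef _ _ hWmem]
      have hweq : (⟨((w : G × X).1, hh' x'), hWmem⟩ : ↥W) = w := by
        apply Subtype.ext
        exact Prod.ext_iff.mpr ⟨rfl, hh'def g' x' h'⟩
      rw [hweq, hw, Homeomorph.apply_symm_apply]
    -- continuity
    have hcont : ContinuousOn hh {x : X | ∃ g : G, (g, x) ∈ W} :=
      contOnAux hWopen (iso.k : ↥W → ↥W') iso.k.continuous hh (fun g x h => hhdef g x h)
    have hcont' : ContinuousOn hh' {x' : X' | ∃ g' : G', (g', x') ∈ W'} :=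
      contOnAux hW'open (iso.k.symm : ↥W' → ↥W) iso.k.symm.continuous hh'
        (fun g' x' h => hh'def g' x' h)
    refine ⟨hmem, ⟨⟨⟨fun w => ⟨hh w.1, hmem w.1 w.2⟩, fun w' => ⟨hh' w'.1, hmem' w'.1 w'.2⟩,
      fun w => Subtype.ext (hleft w.1 w.2), fun w' => Subtype.ext (hright w'.1 w'.2)⟩,
      ?_, ?_⟩, fun w => rfl⟩, ?_⟩
    · exact Continuous.subtype_mk (continuousOn_iff_continuous_restrict.mp hcont) _
    · exact Continuous.subtype_mk (continuousOn_iff_continuous_restrict.mp hcont') _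
    -- slice homeomorphisms
    · rintro x ⟨g₀, hg₀⟩
      have hsnd : ∀ (g' : G') (h' : (g', hh x) ∈ W'),
          ((iso.k.symm ⟨(g', hh x), h'⟩ : ↥W) : G × X).2 = x := by
        intro g' h'
        have : ((iso.k.symm ⟨(g', hh x), h'⟩ : ↥W) : G × X).2
            = ((iso.k.symm (iso.k ⟨(g₀, x), hg₀⟩) : ↥W) : G × X).2 :=
          hk' ⟨(g', hh x), h'⟩ (iso.k ⟨(g₀, x), hg₀⟩) (hhdef g₀ x hg₀)
        rw [this, Homeomorph.symm_apply_apply]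
      have hmemF : ∀ (g : G) (hg : (g, x) ∈ W),
          (((iso.k ⟨(g, x), hg⟩ : ↥W') : G' × X').1, hh x) ∈ W' := by
        intro g hg
        rw [hhdef g x hg]; simpa using (iso.k ⟨(g, x), hg⟩).2
      have hmemB : ∀ (g' : G') (h' : (g', hh x) ∈ W'),
          (((iso.k.symm ⟨(g', hh x), h'⟩ : ↥W) : G × X).1, x) ∈ W := by
        intro g' h'
        have := (iso.k.symm ⟨(g', hh x), h'⟩).2
        rwa [show ((iso.k.symm ⟨(g', hh x), h'⟩ : ↥W) : G × X)
          = (((iso.k.symm ⟨(g', hh x), h'⟩ : ↥W) : G × X).1, x) from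
            Prod.ext_iff.mpr ⟨rfl, hsnd g' h'⟩] at this
      refine ⟨⟨⟨fun g => ⟨((iso.k ⟨(g.1, x), g.2⟩ : ↥W') : G' × X').1, hmemF g.1 g.2⟩,
        fun g' => ⟨((iso.k.symm ⟨(g'.1, hh x), g'.2⟩ : ↥W) : G × X).1, hmemB g'.1 g'.2⟩,
        ?_, ?_⟩, ?_, ?_⟩, fun g hg => rfl⟩
      · intro g
        apply Subtype.ext
        have hweq : (⟨(((iso.k ⟨(g.1, x), g.2⟩ : ↥W') : G' × X').1, hh x),
            hmemF g.1 g.2⟩ : ↥W') = iso.k ⟨(g.1, x), g.2⟩ :=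
          Subtype.ext (Prod.ext_iff.mpr ⟨rfl, hhdef g.1 x g.2⟩)
        show ((iso.k.symm (⟨_, hmemF g.1 g.2⟩ : ↥W') : ↥W) : G × X).1 = g.1
        rw [hweq, Homeomorph.symm_apply_apply]
      · intro g'
        apply Subtype.ext
        have hweq : (⟨(((iso.k.symm ⟨(g'.1, hh x), g'.2⟩ : ↥W) : G × X).1, x),
            hmemB g'.1 g'.2⟩ : ↥W) = iso.k.symm ⟨(g'.1, hh x), g'.2⟩ :=
          Subtype.ext (Prod.ext_iff.mpr ⟨rfl, (hsnd g'.1 g'.2).symm⟩)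
        show ((iso.k (⟨_, hmemB g'.1 g'.2⟩ : ↥W) : ↥W') : G' × X').1 = g'.1
        rw [hweq, Homeomorph.apply_symm_apply]
      · exact Continuous.subtype_mk ((continuous_fst.comp continuous_subtype_val).comp
          (iso.k.continuous.comp (Continuous.subtype_mk
            (continuous_subtype_val.prodMk continuous_const) _))) _
      · exact Continuous.subtype_mk ((continuous_fst.comp continuous_subtype_val).comp
          (iso.k.symm.continuous.comp (Continuous.subtype_mk
            (continuous_subtype_val.prodMk continuous_const) _))) _


end Yorke
end

section
/- Let the star-constructions S*(G×X) and (S')*(G'×X') be isomorphic via phase space-preserving isomorphisms, where S and S' are σ-invariant, with induced homeomorphism ĥ: X → X'. Then A ⊆ X is weakly invariant with respect to S if and only if ĥ(A) is weakly invariant with respect to S'. In particular, x₀ ∈ X is an equilibrium of S if and only if ĥ(x₀) is an equilibrium of S'. -/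
open Set Filter Topology TopologicalSpace

namespace Yorke

variable {G X : Type*} [Group G] [TopologicalSpace G] [IsTopologicalGroup G]
  [LocallyCompactSpace G] [SecondCountableTopology G] [T2Space G]
  [MetricSpace X] [SecondCountableTopology X]

variable {G' X' : Type*} [Group G'] [TopologicalSpace G'] [IsTopologicalGroup G']
  [LocallyCompactSpace G'] [SecondCountableTopology G'] [T2Space G']
  [MetricSpace X'] [SecondCountableTopology X']

section Aux

variable {G₁ X₁ G₂ X₂ : Type*} [Group G₁] [TopologicalSpace G₁] [IsTopologicalGroup G₁]
  [TopologicalSpace X₁] [Group G₂] [TopologicalSpace G₂] [IsTopologicalGroup G₂]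
  [TopologicalSpace X₂]

/-- The inverse of a star-isomorphism over `univ` is again a star-isomorphism. -/
def StarIso.symmUniv {S : Set (Cs G₁ X₁)} {S' : Set (Cs G₂ X₂)}
    (iso : StarIso S (Set.univ : Set (G₁ × X₁)) S' (Set.univ : Set (G₂ × X₂))) :
    StarIso S' (Set.univ : Set (G₂ × X₂)) S (Set.univ : Set (G₁ × X₁)) where
  H := iso.H.symm
  k := iso.k.symm
  η := iso.η.symm
  ev_comm := by
    intro q' x' hx' hW' x hx
    set q := iso.H.symm q' with hqdef
    have hq : iso.H q = q' := iso.H.apply_symm_apply q'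
    have h := iso.ev_comm q x hx (Set.mem_univ _) x' (by rw [hq]; exact hx')
    have h2 : iso.k ⟨(q.1.1, x), Set.mem_univ _⟩ = ⟨(q'.1.1, x'), hW'⟩ :=
      Subtype.ext (by rw [h, hq])
    have h3 : iso.k.symm ⟨(q'.1.1, x'), hW'⟩ = ⟨(q.1.1, x), Set.mem_univ _⟩ := by
      rw [← h2, Homeomorph.symm_apply_apply]
    rw [h3]
  p_comm := by
    intro q'
    set q := iso.H.symm q' with hqdef
    have hq : iso.H q = q' := iso.H.apply_symm_apply q'
    have h := iso.p_comm q
    rw [hq] at h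
    have h1 : (⟨q'.1.2, q'.2.1⟩ : ↥S') = iso.η ⟨q.1.2, q.2.1⟩ := Subtype.ext h
    have h2 : iso.η.symm ⟨q'.1.2, q'.2.1⟩ = ⟨q.1.2, q.2.1⟩ := by
      rw [h1, Homeomorph.symm_apply_apply]
    rw [h2]

variable {S : Set (Cs G₁ X₁)} {S' : Set (Cs G₂ X₂)}
  (iso : StarIso S (Set.univ : Set (G₁ × X₁)) S' (Set.univ : Set (G₂ × X₂)))
  (hh : X₁ → X₂)
  (hhdef : ∀ (g : G₁) (x : X₁),
    hh x = ((iso.k ⟨(g, x), Set.mem_univ _⟩ : ↥(Set.univ : Set (G₂ × X₂))) : G₂ × X₂).2)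

include hhdef

/-- Values of a solution are transported by `ĥ` to values of the corresponding solution. -/
theorem key_val (φ : Cs G₁ X₁) (hφ : φ ∈ S) (g : G₁) (x : X₁) (hx : φ.1.1 g = some x) :
    ∃ g' : G₂, (↑(iso.η ⟨φ, hφ⟩) : Cs G₂ X₂).1.1 g' = some (hh x) := by
  set q : ↥(star S (Set.univ : Set (G₁ × X₁))) :=
    ⟨(g, φ), hφ, x, hx, Set.mem_univ _⟩ with hqdef
  obtain ⟨hS', x', hx', -⟩ := (iso.H q).2
  have hp := iso.p_comm q
  have he := iso.ev_comm q x hx (Set.mem_univ _) x' hx'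
  have hxx' : hh x = x' := by rw [hhdef g x, he]
  refine ⟨(iso.H q).1.1, ?_⟩
  rw [hxx', ← hp]
  exact hx'

/-- The orbit of the corresponding solution is contained in the `ĥ`-image of the orbit. -/
theorem key_orbit (φ : Cs G₁ X₁) (hφ : φ ∈ S) :
    orbit (↑(iso.η ⟨φ, hφ⟩) : Cs G₂ X₂) ⊆ hh '' orbit φ := by
  rintro y' ⟨g', hg'⟩
  set q' : ↥(star S' (Set.univ : Set (G₂ × X₂))) :=
    ⟨(g', ↑(iso.η ⟨φ, hφ⟩)), (iso.η ⟨φ, hφ⟩).2, y', hg', Set.mem_univ _⟩ with hq'def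
  set q := iso.H.symm q' with hqdef
  have hq : iso.H q = q' := iso.H.apply_symm_apply q'
  obtain ⟨hS, x, hx, -⟩ := q.2
  have hp := iso.p_comm q
  rw [hq] at hp
  have hfeq : q.1.2 = φ := by
    have : (⟨q.1.2, q.2.1⟩ : ↥S) = ⟨φ, hφ⟩ := iso.η.injective (Subtype.ext hp.symm)
    exact congrArg Subtype.val this
  have he := iso.ev_comm q x hx (Set.mem_univ _) y' (by rw [hq]; exact hg')
  have hxx' : hh x = y' := by rw [hhdef q.1.1 x, he]
  exact ⟨x, ⟨q.1.1, by rw [← hfeq]; exact hx⟩, hxx'⟩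

/-- One direction of the weak-invariance correspondence. -/
theorem wkFwd (hσ' : SigmaInvariant S') (A : Set X₁) (hA : WeaklyInvariant S A) :
    WeaklyInvariant S' (hh '' A) := by
  rintro y ⟨x, hxA, rfl⟩
  obtain ⟨φ, hφ, h1, horb⟩ := hA x hxA
  obtain ⟨g', hg'⟩ := key_val iso hh hhdef φ hφ 1 x h1
  obtain ⟨χ, hχS, hχ⟩ := hσ' g' _ (iso.η ⟨φ, hφ⟩).2
  refine ⟨χ, hχS, ?_, ?_⟩
  · show χ.1.1 1 = _
    rw [hχ]
    show (↑(iso.η ⟨φ, hφ⟩) : Cs G₂ X₂).1.1 (1 * g') = _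
    rw [one_mul]
    exact hg'
  · rintro y ⟨a, ha⟩
    rw [hχ] at ha
    have : y ∈ orbit (↑(iso.η ⟨φ, hφ⟩) : Cs G₂ X₂) := ⟨a * g', ha⟩
    obtain ⟨x₁, hx₁, rfl⟩ := key_orbit iso hh hhdef φ hφ this
    exact ⟨x₁, horb hx₁, rfl⟩

/-- One direction of the equilibrium correspondence. -/
theorem eqFwd (hσ' : SigmaInvariant S') (x₀ : X₁) (hx₀ : Equilibrium S x₀) :
    Equilibrium S' (hh x₀) := by
  obtain ⟨φ, hφ, h1, horb⟩ := hx₀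
  obtain ⟨g', hg'⟩ := key_val iso hh hhdef φ hφ 1 x₀ h1
  obtain ⟨χ, hχS, hχ⟩ := hσ' g' _ (iso.η ⟨φ, hφ⟩).2
  have hχ1 : χ.1.1 1 = some (hh x₀) := by
    rw [hχ]
    show (↑(iso.η ⟨φ, hφ⟩) : Cs G₂ X₂).1.1 (1 * g') = _
    rw [one_mul]
    exact hg'
  refine ⟨χ, hχS, hχ1, Set.Subset.antisymm ?_ ?_⟩
  · rintro y ⟨a, ha⟩
    rw [hχ] at ha
    have : y ∈ orbit (↑(iso.η ⟨φ, hφ⟩) : Cs G₂ X₂) := ⟨a * g', ha⟩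
    obtain ⟨x₁, hx₁, rfl⟩ := key_orbit iso hh hhdef φ hφ this
    rw [horb] at hx₁
    rw [hx₁]
    rfl
  · rintro y rfl
    exact ⟨1, hχ1⟩

end Aux

/-- Under a phase space-preserving isomorphism of `σ`-invariant systems, weak invariance
and equilibria correspond via `ĥ`. -/
theorem statement_17 (S : Set (Cs G X)) (S' : Set (Cs G' X'))
    (hσ : SigmaInvariant S) (hσ' : SigmaInvariant S')
    (iso : StarIso S (Set.univ : Set (G × X)) S' (Set.univ : Set (G' × X')))
    (hk : PreservesPhase iso.k) (hk' : PreservesPhase iso.k.symm)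
    (hh : X → X')
    (hhdef : ∀ (g : G) (x : X),
      hh x = ((iso.k ⟨(g, x), Set.mem_univ _⟩ : ↥(Set.univ : Set (G' × X'))) : G' × X').2) :
    (∀ A : Set X, WeaklyInvariant S A ↔ WeaklyInvariant S' (hh '' A)) ∧
    ∀ x₀ : X, Equilibrium S x₀ ↔ Equilibrium S' (hh x₀) := by
  set hh' : X' → X := fun x' =>
    ((iso.k.symm ⟨((1 : G'), x'), Set.mem_univ _⟩ : ↥(Set.univ : Set (G × X))) : G × X).2
    with hh'def0
  have hhdef' : ∀ (g' : G') (x' : X'),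
      hh' x' = ((iso.symmUniv.k ⟨(g', x'), Set.mem_univ _⟩ :
        ↥(Set.univ : Set (G × X))) : G × X).2 := by
    intro g' x'
    exact hk' ⟨((1 : G'), x'), Set.mem_univ _⟩ ⟨(g', x'), Set.mem_univ _⟩ rfl
  have hhdefu : ∀ (g : G) (x : X),
      hh x = ((iso.symmUniv.symmUniv.k ⟨(g, x), Set.mem_univ _⟩ :
        ↥(Set.univ : Set (G' × X'))) : G' × X').2 := by
    intro g x
    rw [hhdef g x]
    rfl
  have hleft : ∀ x : X, hh' (hh x) = x := by
    intro x
    have h1 : hh x = ((iso.k ⟨((1 : G), x), Set.mem_univ _⟩ :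
        ↥(Set.univ : Set (G' × X'))) : G' × X').2 := hhdef 1 x
    have h2 : hh' (hh x) = ((iso.k.symm (iso.k ⟨((1 : G), x), Set.mem_univ _⟩) :
        ↥(Set.univ : Set (G × X))) : G × X).2 := by
      have := hk' ⟨((1 : G'), hh x), Set.mem_univ _⟩
        (iso.k ⟨((1 : G), x), Set.mem_univ _⟩) (by rw [h1])
      exact this
    rw [h2, Homeomorph.symm_apply_apply]
  have himg : ∀ A : Set X, hh' '' (hh '' A) = A := by
    intro A
    ext x
    constructor
    · rintro ⟨y, ⟨z, hz, rfl⟩, rfl⟩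
      rw [hleft z]; exact hz
    · intro hx
      exact ⟨hh x, ⟨x, hx, rfl⟩, hleft x⟩
  constructor
  · intro A
    constructor
    · exact fun hA => wkFwd iso hh hhdef hσ' A hA
    · intro hA'
      have := wkFwd iso.symmUniv hh' hhdef' hσ (hh '' A) hA'
      rwa [himg A] at this
  · intro x₀
    constructor
    · exact fun hx => eqFwd iso hh hhdef hσ' x₀ hx
    · intro hx'
      have := eqFwd iso.symmUniv hh' hhdef' hσ (hh x₀) hx'
      rwa [hleft x₀] at this

end Yorke
end

section
/- Let the star-constructions S*(G×X) and (S')*(G'×X') be isomorphic via phase space-preserving isomorphisms with k = (τ,h). For each φ ∈ S, the map D_φ: dom φ → dom η(φ) defined by D_φ(g) := τ(g,φ(g)) is a homeomorphism. Further, if S has domain G and S' has domain G', the map D: S × G → G' defined by D(φ,g) := D_φ(g) is continuous; in particular, if S is path connected, then all maps in the family {D_φ: G → G' : φ ∈ S} are isotopic. -/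
open Set Filter Topology TopologicalSpace

namespace Yorke

variable {G X : Type*} [Group G] [TopologicalSpace G] [IsTopologicalGroup G]
  [LocallyCompactSpace G] [SecondCountableTopology G] [T2Space G]
  [MetricSpace X] [SecondCountableTopology X]

variable {G' X' : Type*} [Group G'] [TopologicalSpace G'] [IsTopologicalGroup G']
  [LocallyCompactSpace G'] [SecondCountableTopology G'] [T2Space G']
  [MetricSpace X'] [SecondCountableTopology X']


section AuxIso

variable {G X G' X' : Type*} [TopologicalSpace G] [TopologicalSpace X]
    [TopologicalSpace G'] [TopologicalSpace X']
variable {S : Set (Cs G X)} {S' : Set (Cs G' X')}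

lemma mem_star_univ {φ : Cs G X} (hφ : φ ∈ S) {g : G} (hg : g ∈ dom φ.1) :
    (g, φ) ∈ star S (Set.univ : Set (G × X)) := by
  obtain ⟨x, hx⟩ := Option.ne_none_iff_exists'.mp hg
  exact ⟨hφ, x, hx, trivial⟩

lemma star_mem_dom {p : G × Cs G X} (hp : p ∈ star S (Set.univ : Set (G × X))) :
    p.1 ∈ dom p.2.1 := by
  obtain ⟨-, x, hx, -⟩ := hp
  simp only [dom, Set.mem_setOf_eq, hx]
  simp

variable (iso : StarIso S (Set.univ : Set (G × X)) S' (Set.univ : Set (G' × X')))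

lemma H_fst_eq (q : ↥(star S (Set.univ : Set (G × X)))) {x : X}
    (hx : q.1.2.1.1 q.1.1 = some x) :
    (iso.H q).1.1 =
      ((iso.k ⟨(q.1.1, x), Set.mem_univ _⟩ : ↥(Set.univ : Set (G' × X'))) : G' × X').1 := by
  obtain ⟨-, x', hx', -⟩ := (iso.H q).2
  have h := iso.ev_comm q x hx (Set.mem_univ _) x' hx'
  rw [h]

lemma H_snd_eq (q : ↥(star S (Set.univ : Set (G × X)))) :
    (iso.H q).1.2 = (iso.η ⟨q.1.2, q.2.1⟩ : ↥S') := iso.p_comm q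

lemma Hsymm_snd_eq (q' : ↥(star S' (Set.univ : Set (G' × X')))) :
    (iso.H.symm q').1.2 = (iso.η.symm ⟨q'.1.2, q'.2.1⟩ : ↥S) := by
  have h1 := iso.p_comm (iso.H.symm q')
  rw [iso.H.apply_symm_apply] at h1
  have h2 : (⟨q'.1.2, q'.2.1⟩ : ↥S')
      = iso.η ⟨(iso.H.symm q').1.2, (iso.H.symm q').2.1⟩ := Subtype.ext h1
  have h3 := congrArg iso.η.symm h2
  rw [iso.η.symm_apply_apply] at h3
  exact (congrArg Subtype.val h3).symm

/-- The homeomorphism `D_φ : dom φ → dom η(φ)`. -/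
noncomputable def domHomeo (φ : ↥S) :
    ↥(dom (φ : Cs G X).1) ≃ₜ ↥(dom ((iso.η φ : ↥S') : Cs G' X').1) where
  toFun gh :=
    ⟨(iso.H ⟨((gh : G), (φ : Cs G X)), mem_star_univ φ.2 gh.2⟩).1.1, by
      have hmem := star_mem_dom (iso.H ⟨((gh : G), (φ : Cs G X)), mem_star_univ φ.2 gh.2⟩).2
      have hsnd := H_snd_eq iso ⟨((gh : G), (φ : Cs G X)), mem_star_univ φ.2 gh.2⟩
      rw [show (⟨(φ : Cs G X), φ.2⟩ : ↥S) = φ from Subtype.ext rfl] at hsnd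
      rwa [hsnd] at hmem⟩
  invFun gh' :=
    ⟨(iso.H.symm ⟨((gh' : G'), ((iso.η φ : ↥S') : Cs G' X')),
        mem_star_univ (iso.η φ).2 gh'.2⟩).1.1, by
      have hmem := star_mem_dom (iso.H.symm ⟨((gh' : G'), ((iso.η φ : ↥S') : Cs G' X')),
        mem_star_univ (iso.η φ).2 gh'.2⟩).2
      have hsnd := Hsymm_snd_eq iso ⟨((gh' : G'), ((iso.η φ : ↥S') : Cs G' X')),
        mem_star_univ (iso.η φ).2 gh'.2⟩
      rw [show (⟨((iso.η φ : ↥S') : Cs G' X'), (iso.η φ).2⟩ : ↥S') = iso.η φ from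
        Subtype.ext rfl, iso.η.symm_apply_apply] at hsnd
      rwa [hsnd] at hmem⟩
  left_inv gh := by
    set q : ↥(star S (Set.univ : Set (G × X))) :=
      ⟨((gh : G), (φ : Cs G X)), mem_star_univ φ.2 gh.2⟩ with hq
    have hsnd := H_snd_eq iso q
    rw [show (⟨(φ : Cs G X), φ.2⟩ : ↥S) = φ from Subtype.ext rfl] at hsnd
    have hmem : (iso.H q).1.1 ∈ dom ((iso.η φ : ↥S') : Cs G' X').1 := by
      have h := star_mem_dom (iso.H q).2
      rwa [hsnd] at h
    apply Subtype.ext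
    show (iso.H.symm ⟨((iso.H q).1.1, ((iso.η φ : ↥S') : Cs G' X')),
        mem_star_univ (iso.η φ).2 hmem⟩).1.1 = (gh : G)
    rw [show (⟨((iso.H q).1.1, ((iso.η φ : ↥S') : Cs G' X')),
          mem_star_univ (iso.η φ).2 hmem⟩ : ↥(star S' (Set.univ : Set (G' × X'))))
        = iso.H q from Subtype.ext (Prod.ext rfl hsnd.symm), iso.H.symm_apply_apply]
  right_inv gh' := by
    set q' : ↥(star S' (Set.univ : Set (G' × X'))) :=
      ⟨((gh' : G'), ((iso.η φ : ↥S') : Cs G' X')), mem_star_univ (iso.η φ).2 gh'.2⟩ with hq'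
    have hsnd := Hsymm_snd_eq iso q'
    rw [show (⟨((iso.η φ : ↥S') : Cs G' X'), (iso.η φ).2⟩ : ↥S') = iso.η φ from
      Subtype.ext rfl, iso.η.symm_apply_apply] at hsnd
    have hmem : (iso.H.symm q').1.1 ∈ dom (φ : Cs G X).1 := by
      have h := star_mem_dom (iso.H.symm q').2
      rwa [hsnd] at h
    apply Subtype.ext
    show (iso.H ⟨((iso.H.symm q').1.1, (φ : Cs G X)),
        mem_star_univ φ.2 hmem⟩).1.1 = (gh' : G')
    rw [show (⟨((iso.H.symm q').1.1, (φ : Cs G X)),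
          mem_star_univ φ.2 hmem⟩ : ↥(star S (Set.univ : Set (G × X))))
        = iso.H.symm q' from Subtype.ext (Prod.ext rfl hsnd.symm), iso.H.apply_symm_apply]
  continuous_toFun := by
    apply Continuous.subtype_mk
    exact continuous_fst.comp (continuous_subtype_val.comp (iso.H.continuous.comp
      (Continuous.subtype_mk (continuous_subtype_val.prodMk continuous_const) _)))
  continuous_invFun := by
    apply Continuous.subtype_mk
    exact continuous_fst.comp (continuous_subtype_val.comp (iso.H.symm.continuous.comp
      (Continuous.subtype_mk (continuous_subtype_val.prodMk continuous_const) _)))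

lemma domHomeo_spec (φ : ↥S) (g : G) (hg : g ∈ dom (φ : Cs G X).1) (x : X)
    (hx : (φ : Cs G X).1.1 g = some x) :
    ((domHomeo iso φ ⟨g, hg⟩ : ↥(dom ((iso.η φ : ↥S') : Cs G' X').1)) : G') =
      ((iso.k ⟨(g, x), Set.mem_univ _⟩ : ↥(Set.univ : Set (G' × X'))) : G' × X').1 :=
  H_fst_eq iso ⟨(g, (φ : Cs G X)), mem_star_univ φ.2 hg⟩ hx

end AuxIso

/-- For a phase space-preserving isomorphism, each `D_φ : dom φ → dom η(φ)`,
`D_φ(g) = τ(g,φ(g))`, is a homeomorphism; if moreover `S`, `S'` have domains `G`, `G'`,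
then `D(φ,g) := D_φ(g)` is continuous on `S × G`, and if `S` is path connected all the
maps `D_φ` are isotopic. -/
theorem statement_18 (S : Set (Cs G X)) (S' : Set (Cs G' X'))
    (iso : StarIso S (Set.univ : Set (G × X)) S' (Set.univ : Set (G' × X')))
    (hk : PreservesPhase iso.k) (hk' : PreservesPhase iso.k.symm) :
    (∀ φ : ↥S,
      ∃ e : ↥(dom (φ : Cs G X).1) ≃ₜ ↥(dom ((iso.η φ : ↥S') : Cs G' X').1),
        ∀ (g : G) (hg : g ∈ dom (φ : Cs G X).1) (x : X), (φ : Cs G X).1.1 g = some x →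
          ((e ⟨g, hg⟩) : G') =
            ((iso.k ⟨(g, x), Set.mem_univ _⟩ : ↥(Set.univ : Set (G' × X'))) : G' × X').1) ∧
    ((∀ φ : Cs G X, φ ∈ S → dom φ.1 = Set.univ) →
      (∀ φ' : Cs G' X', φ' ∈ S' → dom φ'.1 = Set.univ) →
      ∀ D : ↥S × G → G',
        (∀ (φ : ↥S) (g : G) (x : X), (φ : Cs G X).1.1 g = some x →
          D (φ, g) =
            ((iso.k ⟨(g, x), Set.mem_univ _⟩ : ↥(Set.univ : Set (G' × X'))) : G' × X').1) →
        Continuous D ∧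
          (IsPathConnected S → ∀ φ ψ : ↥S,
            Isotopic (fun g : G => D (φ, g)) (fun g : G => D (ψ, g)))) := by
  constructor
  · intro φ
    exact ⟨domHomeo iso φ, fun g hg x hx => domHomeo_spec iso φ g hg x hx⟩
  · intro hdom hdom' D hD
    have hmemdom : ∀ (φ : ↥S) (g : G), g ∈ dom (φ : Cs G X).1 := by
      intro φ g
      rw [hdom (φ : Cs G X) φ.2]
      trivial
    have hval : ∀ (φ : ↥S) (g : G),
        D (φ, g) = (iso.H ⟨(g, (φ : Cs G X)), mem_star_univ φ.2 (hmemdom φ g)⟩).1.1 := by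
      intro φ g
      obtain ⟨x, hx⟩ := Option.ne_none_iff_exists'.mp (hmemdom φ g)
      rw [hD φ g x hx, H_fst_eq iso ⟨(g, (φ : Cs G X)), mem_star_univ φ.2 (hmemdom φ g)⟩ hx]
    have hDeq : D = fun p : ↥S × G =>
        (iso.H ⟨(p.2, (p.1 : Cs G X)), mem_star_univ p.1.2 (hmemdom p.1 p.2)⟩).1.1 := by
      funext p
      exact hval p.1 p.2
    have hcont : Continuous D := by
      rw [hDeq]
      exact continuous_fst.comp (continuous_subtype_val.comp (iso.H.continuous.comp
        (Continuous.subtype_mk (continuous_snd.prodMk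
          (continuous_subtype_val.comp continuous_fst)) _)))
    refine ⟨hcont, fun hpc φ ψ => ?_⟩
    have hJ : Joined φ ψ := by
      have := (hpc.joinedIn (φ : Cs G X) φ.2 (ψ : Cs G X) ψ.2).joined_subtype
      exact this
    obtain ⟨γ⟩ := hJ
    refine ⟨fun p => D (γ p.1, p.2), hcont.comp
      ((γ.continuous.comp continuous_fst).prodMk continuous_snd), ?_, ?_, ?_⟩
    · intro a
      show D (γ 0, a) = D (φ, a)
      rw [γ.source]
    · intro a
      show D (γ 1, a) = D (ψ, a)
      rw [γ.target]
    · intro s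
      have h1 : (Set.univ : Set G) = dom ((γ s : ↥S) : Cs G X).1 := (hdom _ (γ s).2).symm
      have h2 : dom ((iso.η (γ s) : ↥S') : Cs G' X').1 = (Set.univ : Set G') :=
        hdom' _ (iso.η (γ s)).2
      have hfull : (fun g => D (γ s, g)) =
          ((Homeomorph.Set.univ G).symm.trans ((Homeomorph.setCongr h1).trans
            ((domHomeo iso (γ s)).trans ((Homeomorph.setCongr h2).trans
              (Homeomorph.Set.univ G'))))) := by
        funext g
        rw [hval (γ s) g]
        rfl
      rw [hfull]
      exact Homeomorph.isHomeomorph _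


end Yorke
end
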